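/- Let k ≥ 1 and let [a_i, b_i] for i = 1,…,k be subintervals of [0, m] each of length at least 1, and let Z be the set of linear orders on {1,…,k} realizable by picking distinct z_i ∈ [a_i, b_i]. Then ∑_{i=1}^k log₂(b_i − a_i) ≤ log₂ |Z| + k · log₂(e·m/k). -/

import Mathlib

open MeasureTheory Set

variable {k : ℕ}

/-- The open order-region of a permutation. -/
def Sreg (σ : Equiv.Perm (Fin k)) : Set (Fin k → ℝ) :=
  {x | ∀ i j, σ i < σ j → x i < x j}

lemma Sreg_measurable (σ : Equiv.Perm (Fin k)) : MeasurableSet (Sreg σ) := by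
  have : Sreg σ = ⋂ (i) (j) (_ : σ i < σ j), {x : Fin k → ℝ | x i < x j} := by
    ext x; simp [Sreg]
  rw [this]
  exact MeasurableSet.iInter fun i => MeasurableSet.iInter fun j =>
    MeasurableSet.iInter fun _ =>
      measurableSet_lt (measurable_pi_apply i) (measurable_pi_apply j)

lemma strictMono_perm_eq_id (ρ : Equiv.Perm (Fin k)) (h : StrictMono ρ) : ∀ x, ρ x = x := by
  let e : Fin k ≃o Fin k := ⟨ρ, fun {i j} => h.le_iff_le⟩
  have h2 : e = OrderIso.refl (Fin k) := Subsingleton.elim _ _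
  intro x
  have h3 := DFunLike.congr_fun h2 x
  simpa [e] using h3

lemma Sreg_eq_of_mem {σ τ : Equiv.Perm (Fin k)} {x : Fin k → ℝ}
    (hσ : x ∈ Sreg σ) (hτ : x ∈ Sreg τ) : σ = τ := by
  have key : ∀ i j, σ i < σ j ↔ τ i < τ j := by
    intro i j
    constructor
    · intro h
      rcases lt_trichotomy (τ i) (τ j) with h' | h' | h'
      · exact h'
      · exact absurd (τ.injective h') (by rintro rfl; exact lt_irrefl _ h)
      · exact absurd (hτ j i h') (not_lt.2 (hσ i j h).le)
    · intro h
      rcases lt_trichotomy (σ i) (σ j) with h' | h' | h'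
      · exact h'
      · exact absurd (σ.injective h') (by rintro rfl; exact lt_irrefl _ h)
      · exact absurd (hσ j i h') (not_lt.2 (hτ i j h).le)
  have hmono : StrictMono (τ * σ⁻¹ : Equiv.Perm (Fin k)) := by
    intro u v huv
    have := (key (σ⁻¹ u) (σ⁻¹ v)).1 (by simpa using huv)
    simpa using this
  ext x
  have h4 := strictMono_perm_eq_id _ hmono (σ x)
  simp only [Equiv.Perm.mul_apply, Equiv.Perm.inv_def, Equiv.symm_apply_apply] at h4
  exact congrArg Fin.val h4.symm

lemma exists_perm_of_injective {x : Fin k → ℝ} (hx : Function.Injective x) :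
    ∃ σ : Equiv.Perm (Fin k), ∀ i j, σ i < σ j ↔ x i < x j := by
  classical
  refine ⟨(Tuple.sort x)⁻¹, fun i j => ?_⟩
  have hm : StrictMono (x ∘ Tuple.sort x) :=
    (Tuple.monotone_sort x).strictMono_of_injective (hx.comp (Tuple.sort x).injective)
  have h1 : ∀ i, (x ∘ Tuple.sort x) ((Tuple.sort x)⁻¹ i) = x i := by
    intro i; simp
  rw [← h1 i, ← h1 j]
  exact (hm.lt_iff_lt).symm

lemma vol_Sreg_inter (m : ℝ) (σ : Equiv.Perm (Fin k)) :
    volume (Sreg σ ∩ Set.pi univ fun _ : Fin k => Icc (0:ℝ) m) =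
    volume (Sreg 1 ∩ Set.pi univ fun _ : Fin k => Icc (0:ℝ) m) := by
  set C0 : Set (Fin k → ℝ) := Set.pi univ fun _ : Fin k => Icc (0:ℝ) m with hC0
  set T := MeasurableEquiv.piCongrLeft (fun _ : Fin k => ℝ) (σ : Fin k ≃ Fin k) with hTdef
  have hT : ∀ (x : Fin k → ℝ) (b : Fin k), T x b = x (σ.symm b) := by
    intro x b
    have h1 : (Equiv.piCongrLeft (fun _ : Fin k => ℝ) (σ : Fin k ≃ Fin k)) x (σ (σ.symm b))
        = x (σ.symm b) := Equiv.piCongrLeft_apply_apply _ _ _ _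
    have h2 : (T x : Fin k → ℝ) = (Equiv.piCongrLeft (fun _ : Fin k => ℝ) σ) x := by
      rw [hTdef]; rfl
    rw [h2]
    simp only [Equiv.apply_symm_apply] at h1; exact h1
  have hmp := MeasureTheory.volume_measurePreserving_piCongrLeft (fun _ : Fin k => ℝ)
    (σ : Fin k ≃ Fin k)
  have hpre : T ⁻¹' (Sreg 1 ∩ C0) = Sreg σ ∩ C0 := by
    ext x
    simp only [Set.mem_preimage, Set.mem_inter_iff, hC0, Set.mem_pi, Set.mem_univ, true_implies]
    constructor
    · rintro ⟨h1, h2⟩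
      constructor
      · intro i j hij
        have := h1 (σ i) (σ j) hij
        simpa [hT] using this
      · intro i
        have := h2 (σ i)
        simpa [hT] using this
    · rintro ⟨h1, h2⟩
      constructor
      · intro i j hij
        have : σ (σ.symm i) < σ (σ.symm j) → x (σ.symm i) < x (σ.symm j) := h1 _ _
        simp only [Equiv.apply_symm_apply] at this
        simp only [hT]
        exact this (by simpa using hij)
      · intro i
        simp only [hT]
        exact h2 _
  have hmeas : MeasurableSet (Sreg (1 : Equiv.Perm (Fin k)) ∩ C0) :=
    (Sreg_measurable 1).inter (MeasurableSet.univ_pi fun _ => measurableSet_Icc)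
  calc volume (Sreg σ ∩ C0) = volume (T ⁻¹' (Sreg 1 ∩ C0)) := by rw [hpre]
    _ = volume (Sreg 1 ∩ C0) := hmp.measure_preimage hmeas.nullMeasurableSet

lemma factorial_mul_vol_le (m : ℝ) (σ : Equiv.Perm (Fin k)) :
    (Nat.factorial k : ENNReal) *
      volume (Sreg σ ∩ Set.pi univ fun _ : Fin k => Icc (0:ℝ) m) ≤
    ENNReal.ofReal m ^ k := by
  set C0 : Set (Fin k → ℝ) := Set.pi univ fun _ : Fin k => Icc (0:ℝ) m with hC0
  have hdisj : Pairwise (Function.onFun Disjoint (fun τ : Equiv.Perm (Fin k) => Sreg τ ∩ C0)) := by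
    intro τ₁ τ₂ hne
    rw [Function.onFun, Set.disjoint_left]
    rintro x ⟨h1, -⟩ ⟨h2, -⟩
    exact hne (Sreg_eq_of_mem h1 h2)
  have hmeas : ∀ τ : Equiv.Perm (Fin k), MeasurableSet (Sreg τ ∩ C0) := fun τ =>
    (Sreg_measurable τ).inter (MeasurableSet.univ_pi fun _ => measurableSet_Icc)
  have hUnion : volume (⋃ τ : Equiv.Perm (Fin k), Sreg τ ∩ C0)
      = ∑ τ : Equiv.Perm (Fin k), volume (Sreg τ ∩ C0) := by
    rw [measure_iUnion hdisj hmeas, tsum_fintype]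
  have hsum : ∑ τ : Equiv.Perm (Fin k), volume (Sreg τ ∩ C0)
      = (Nat.factorial k : ENNReal) * volume (Sreg σ ∩ C0) := by
    have : ∀ τ : Equiv.Perm (Fin k), volume (Sreg τ ∩ C0) = volume (Sreg σ ∩ C0) := by
      intro τ; rw [vol_Sreg_inter m τ, vol_Sreg_inter m σ]
    rw [Finset.sum_congr rfl (fun τ _ => this τ), Finset.sum_const, Finset.card_univ,
      Fintype.card_perm, Fintype.card_fin, nsmul_eq_mul]
  have hsub : (⋃ τ : Equiv.Perm (Fin k), Sreg τ ∩ C0) ⊆ C0 :=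
    Set.iUnion_subset fun τ => Set.inter_subset_right
  have hvolC0 : volume C0 = ENNReal.ofReal m ^ k := by
    rw [hC0, volume_pi_pi, Real.volume_Icc]
    simp [sub_zero]
  calc (Nat.factorial k : ENNReal) * volume (Sreg σ ∩ C0)
      = volume (⋃ τ : Equiv.Perm (Fin k), Sreg τ ∩ C0) := by rw [hUnion, hsum]
    _ ≤ volume C0 := measure_mono hsub
    _ = ENNReal.ofReal m ^ k := hvolC0

lemma vol_noninj_zero :
    volume {x : Fin k → ℝ | ¬ Function.Injective x} = 0 := by
  have hsub : {x : Fin k → ℝ | ¬ Function.Injective x} ⊆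
      ⋃ (p : Fin k × Fin k) (_ : p.1 ≠ p.2), {x : Fin k → ℝ | x p.1 = x p.2} := by
    intro x hx
    simp only [Function.Injective, not_forall] at hx
    obtain ⟨i, j, hij, hne⟩ := hx
    exact Set.mem_iUnion.2 ⟨(i, j), Set.mem_iUnion.2 ⟨hne, hij⟩⟩
  refine measure_mono_null hsub ?_
  refine measure_iUnion_null fun p => measure_iUnion_null fun hne => ?_
  set f : (Fin k → ℝ) →ₗ[ℝ] ℝ := (LinearMap.proj p.1 : (Fin k → ℝ) →ₗ[ℝ] ℝ) - (LinearMap.proj p.2 : (Fin k → ℝ) →ₗ[ℝ] ℝ) with hf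
  have heq : {x : Fin k → ℝ | x p.1 = x p.2} = (LinearMap.ker f : Set (Fin k → ℝ)) := by
    ext x
    simp [hf, LinearMap.mem_ker, sub_eq_zero]
  rw [heq]
  refine MeasureTheory.Measure.addHaar_submodule _ _ ?_
  intro htop
  have : f = 0 := LinearMap.ker_eq_top.1 htop
  have h1 : f (Pi.single p.1 1) = 1 := by
    simp [hf, Pi.single_apply, hne, Ne.symm hne]
  rw [this] at h1
  simp at h1

lemma key_vol (k : ℕ) (hk : 1 ≤ k) (m : ℝ) (a b : Fin k → ℝ)
    (ha : ∀ i, 0 ≤ a i) (hb : ∀ i, b i ≤ m) (hlen : ∀ i, 1 ≤ b i - a i) :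
    (Nat.factorial k : ℝ) * ∏ i, (b i - a i) ≤
      (Nat.card {σ : Equiv.Perm (Fin k) //
        ∃ z : Fin k → ℝ, (∀ i, z i ∈ Set.Icc (a i) (b i)) ∧
          Function.Injective z ∧ (∀ i j, σ i < σ j ↔ z i < z j)}) * m ^ k := by
  classical
  set P : Equiv.Perm (Fin k) → Prop := fun σ =>
    ∃ z : Fin k → ℝ, (∀ i, z i ∈ Set.Icc (a i) (b i)) ∧
      Function.Injective z ∧ (∀ i j, σ i < σ j ↔ z i < z j) with hP
  set Zfin : Finset (Equiv.Perm (Fin k)) := Finset.univ.filter P with hZfin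
  have hm0 : 0 ≤ m := by
    have i0 : Fin k := ⟨0, hk⟩
    have := hlen i0
    have := ha i0
    have := hb i0
    linarith
  set B : Set (Fin k → ℝ) := Set.pi univ fun i => Icc (a i) (b i) with hB
  set C0 : Set (Fin k → ℝ) := Set.pi univ fun _ : Fin k => Icc (0:ℝ) m with hC0
  have hBC0 : B ⊆ C0 := by
    intro x hx
    rw [hC0, Set.mem_pi]
    intro i _
    have hxi := hx i (Set.mem_univ i)
    exact ⟨le_trans (ha i) hxi.1, le_trans hxi.2 (hb i)⟩
  have hcover : B \ {x : Fin k → ℝ | ¬ Function.Injective x} ⊆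
      ⋃ σ ∈ Zfin, (Sreg σ ∩ C0) := by
    rintro x ⟨hxB, hxI⟩
    have hinj : Function.Injective x := not_not.1 hxI
    obtain ⟨σ, hσ⟩ := exists_perm_of_injective hinj
    have hmem : σ ∈ Zfin := by
      rw [hZfin, Finset.mem_filter]
      exact ⟨Finset.mem_univ _, ⟨x, fun i => hxB i (Set.mem_univ i), hinj, hσ⟩⟩
    exact Set.mem_biUnion hmem ⟨fun i j hij => (hσ i j).1 hij, hBC0 hxB⟩
  have hvolB : volume B = ENNReal.ofReal (∏ i, (b i - a i)) := by
    rw [hB, volume_pi_pi]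
    simp only [Real.volume_Icc]
    rw [← ENNReal.ofReal_prod_of_nonneg]
    intro i _
    linarith [hlen i]
  have step1 : volume B ≤ ∑ σ ∈ Zfin, volume (Sreg σ ∩ C0) := by
    calc volume B = volume (B \ {x : Fin k → ℝ | ¬ Function.Injective x}) :=
          (measure_diff_null vol_noninj_zero).symm
      _ ≤ volume (⋃ σ ∈ Zfin, (Sreg σ ∩ C0)) := measure_mono hcover
      _ ≤ ∑ σ ∈ Zfin, volume (Sreg σ ∩ C0) := measure_biUnion_finset_le _ _
  have step2 : (Nat.factorial k : ENNReal) * volume B ≤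
      (Zfin.card : ENNReal) * ENNReal.ofReal m ^ k := by
    calc (Nat.factorial k : ENNReal) * volume B
        ≤ (Nat.factorial k : ENNReal) * ∑ σ ∈ Zfin, volume (Sreg σ ∩ C0) :=
          mul_le_mul_right step1 _
      _ = ∑ σ ∈ Zfin, (Nat.factorial k : ENNReal) * volume (Sreg σ ∩ C0) := by
          rw [Finset.mul_sum]
      _ ≤ ∑ _σ ∈ Zfin, ENNReal.ofReal m ^ k :=
          Finset.sum_le_sum fun σ _ => factorial_mul_vol_le m σ
      _ = (Zfin.card : ENNReal) * ENNReal.ofReal m ^ k := by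
          rw [Finset.sum_const, nsmul_eq_mul]
  have hcard : Nat.card {σ : Equiv.Perm (Fin k) //
      ∃ z : Fin k → ℝ, (∀ i, z i ∈ Set.Icc (a i) (b i)) ∧
        Function.Injective z ∧ (∀ i j, σ i < σ j ↔ z i < z j)} = Zfin.card := by
    rw [Nat.card_eq_fintype_card, hZfin]
    exact Fintype.card_subtype P
  rw [hcard]
  have step3 : ENNReal.ofReal ((Nat.factorial k : ℝ) * ∏ i, (b i - a i)) ≤
      ENNReal.ofReal ((Zfin.card : ℝ) * m ^ k) := by
    have h1 : ENNReal.ofReal ((Nat.factorial k : ℝ) * ∏ i, (b i - a i)) =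
        (Nat.factorial k : ENNReal) * volume B := by
      rw [hvolB, ENNReal.ofReal_mul (by positivity), ENNReal.ofReal_natCast]
    have h2 : ENNReal.ofReal ((Zfin.card : ℝ) * m ^ k) =
        (Zfin.card : ENNReal) * ENNReal.ofReal m ^ k := by
      rw [ENNReal.ofReal_mul (by positivity), ENNReal.ofReal_natCast,
        ENNReal.ofReal_pow hm0]
    rw [h1, h2]
    exact step2
  have := (ENNReal.ofReal_le_ofReal_iff (by positivity)).1 step3
  exact this

theorem stmt_1 (k : ℕ) (hk : 1 ≤ k) (m : ℝ) (a b : Fin k → ℝ)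
    (ha : ∀ i, 0 ≤ a i) (hb : ∀ i, b i ≤ m) (hlen : ∀ i, 1 ≤ b i - a i) :
    ∑ i, Real.logb 2 (b i - a i) ≤
      Real.logb 2 (Nat.card {σ : Equiv.Perm (Fin k) //
        ∃ z : Fin k → ℝ, (∀ i, z i ∈ Set.Icc (a i) (b i)) ∧
          Function.Injective z ∧ (∀ i j, σ i < σ j ↔ z i < z j)}) +
      k * Real.logb 2 (Real.exp 1 * m / k) := by
  have key := key_vol k hk m a b ha hb hlen
  set N : ℕ := Nat.card {σ : Equiv.Perm (Fin k) //
      ∃ z : Fin k → ℝ, (∀ i, z i ∈ Set.Icc (a i) (b i)) ∧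
        Function.Injective z ∧ (∀ i j, σ i < σ j ↔ z i < z j)} with hN
  set Pr : ℝ := ∏ i, (b i - a i) with hPr
  have hkR : (0:ℝ) < k := by exact_mod_cast hk
  have hm1 : (1:ℝ) ≤ m := by
    have i0 : Fin k := ⟨0, hk⟩
    have := hlen i0; have := ha i0; have := hb i0
    linarith
  have hP1 : (1:ℝ) ≤ Pr := by
    calc (1:ℝ) = ∏ _i : Fin k, (1:ℝ) := by simp
      _ ≤ Pr := Finset.prod_le_prod (fun i _ => by norm_num) (fun i _ => hlen i)
  have hPpos : (0:ℝ) < Pr := lt_of_lt_of_le one_pos hP1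
  have hfac : (0:ℝ) < (Nat.factorial k : ℝ) := by exact_mod_cast k.factorial_pos
  have hNpos : 0 < N := by
    rcases Nat.eq_zero_or_pos N with h0 | h
    · exfalso
      rw [h0] at key
      simp only [Nat.cast_zero, zero_mul] at key
      nlinarith
    · exact h
  have hN1 : (1:ℝ) ≤ (N:ℝ) := by exact_mod_cast hNpos
  have hstir : ((k:ℝ)) ^ k ≤ Real.exp 1 ^ k * (Nat.factorial k : ℝ) := by
    have h1 := Real.pow_div_factorial_le_exp (x := (k:ℝ)) hkR.le k
    have h2 : Real.exp (k:ℝ) = Real.exp 1 ^ k := by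
      rw [← Real.exp_nat_mul]; norm_num
    rw [h2, div_le_iff₀ hfac] at h1
    linarith
  have hq : (0:ℝ) < Real.exp 1 * m / k := by positivity
  have hchain : Pr ≤ (N:ℝ) * (Real.exp 1 * m / k) ^ k := by
    have h1 : Pr ≤ (N:ℝ) * m ^ k / (Nat.factorial k : ℝ) := by
      rw [le_div_iff₀ hfac]
      linarith
    have h2 : m ^ k / (Nat.factorial k : ℝ) ≤ (Real.exp 1 * m / k) ^ k := by
      have h3 : (Real.exp 1 * m / k) ^ k = Real.exp 1 ^ k * m ^ k / (k:ℝ) ^ k := by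
        rw [div_pow, mul_pow]
      rw [h3, div_le_div_iff₀ hfac (by positivity)]
      have hmk : (0:ℝ) ≤ m ^ k := by positivity
      nlinarith
    calc Pr ≤ (N:ℝ) * m ^ k / (Nat.factorial k : ℝ) := h1
      _ = (N:ℝ) * (m ^ k / (Nat.factorial k : ℝ)) := by ring
      _ ≤ (N:ℝ) * (Real.exp 1 * m / k) ^ k :=
          mul_le_mul_of_nonneg_left h2 (by positivity)
  have hsum : ∑ i, Real.logb 2 (b i - a i) = Real.logb 2 Pr := by
    simp only [Real.logb, ← Finset.sum_div]
    rw [← Real.log_prod]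
    intro i _
    have := hlen i
    linarith
  rw [hsum]
  calc Real.logb 2 Pr ≤ Real.logb 2 ((N:ℝ) * (Real.exp 1 * m / k) ^ k) :=
        Real.logb_le_logb_of_le (by norm_num : (1:ℝ) < 2) hPpos hchain
    _ = Real.logb 2 (N:ℝ) + Real.logb 2 ((Real.exp 1 * m / k) ^ k) := by
        rw [Real.logb_mul (by positivity) (by positivity)]
    _ = Real.logb 2 (N:ℝ) + k * Real.logb 2 (Real.exp 1 * m / k) := by
        rw [Real.logb_pow]
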